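/- Let J ⊆ I be ideals in a commutative ring R such that J is a demotion of I, i.e., I^r J^s = I^(r+s) ∩ J^s for all r, s ≥ 0. Then for every positive integer k, J^k is a demotion of I^k: (I^k)^r (J^k)^s = (I^k)^(r+s) ∩ (J^k)^s for all r, s ≥ 0. -/
import Mathlib

theorem stmt_3 {R : Type*} [CommRing R] (I J : Ideal R) (hJI : J ≤ I)
    (h : ∀ r s : ℕ, I ^ r * J ^ s = I ^ (r + s) ⊓ J ^ s) (k : ℕ) (hk : 1 ≤ k) :
    ∀ r s : ℕ, (I ^ k) ^ r * (J ^ k) ^ s = (I ^ k) ^ (r + s) ⊓ (J ^ k) ^ s := by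
  intro r s
  simp only [← pow_mul]
  rw [h (k * r) (k * s), Nat.mul_add]
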